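/- Suppose 1 ≤ a_{ij} ≤ 2 for all entries of an n×n matrix A (n ≥ 3), and let B be the doubly stochastic scaling of A. Then every entry of B is at most γ/n for some absolute constant γ (e.g., γ = 32 works). -/

import Mathlib

open Finset

/-- If `1 ≤ a_{ij} ≤ 2` for all entries of an `n × n` matrix `A` (`n ≥ 3`) and
`B` is the doubly stochastic scaling of `A`, then every entry of `B` is at most
`γ/n` for the absolute constant `γ = 32`. -/
theorem scaling_entries_small (n : ℕ) (hn : 3 ≤ n)
    (A B : Matrix (Fin n) (Fin n) ℝ) (lam mu : Fin n → ℝ)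
    (hA1 : ∀ i j, 1 ≤ A i j) (hA2 : ∀ i j, A i j ≤ 2)
    (hlam : ∀ i, 0 < lam i) (hmu : ∀ j, 0 < mu j)
    (hscal : ∀ i j, A i j = B i j * lam i * mu j)
    (hBnonneg : ∀ i j, 0 ≤ B i j)
    (hBrow : ∀ i, ∑ j, B i j = 1) (hBcol : ∀ j, ∑ i, B i j = 1) :
    ∀ k l, B k l ≤ 32 / n := by
  intro k l
  have hnpos : (0:ℝ) < n := by positivity
  have hne : Nonempty (Fin n) := ⟨⟨0, by omega⟩⟩
  set Sm : ℝ := ∑ j, (mu j)⁻¹ with hSm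
  set Sl : ℝ := ∑ i, (lam i)⁻¹ with hSl
  have hSmpos : 0 < Sm := Finset.sum_pos (fun j _ => inv_pos.2 (hmu j)) univ_nonempty
  have hSlpos : 0 < Sl := Finset.sum_pos (fun i _ => inv_pos.2 (hlam i)) univ_nonempty
  have hBeq : ∀ i j, B i j = A i j / (lam i * mu j) := by
    intro i j
    rw [hscal i j, mul_assoc]
    rw [mul_div_cancel_right₀ _ (mul_pos (hlam i) (hmu j)).ne']
  have hlow : ∀ i j, (lam i)⁻¹ * (mu j)⁻¹ ≤ B i j := by
    intro i j
    rw [hBeq, ← mul_inv, inv_eq_one_div]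
    gcongr
    · exact (mul_pos (hlam i) (hmu j)).le
    · exact hA1 i j
  have hhigh : ∀ i j, B i j ≤ 2 * ((lam i)⁻¹ * (mu j)⁻¹) := by
    intro i j
    rw [hBeq, div_eq_mul_inv, ← mul_inv]
    have := hA2 i j
    have hpos : 0 ≤ (lam i * mu j)⁻¹ := (inv_pos.2 (mul_pos (hlam i) (hmu j))).le
    nlinarith
  -- lam i ≥ Sm
  have hlam_ge : ∀ i, Sm ≤ lam i := by
    intro i
    have h1 : (lam i)⁻¹ * Sm ≤ 1 := by
      calc (lam i)⁻¹ * Sm = ∑ j, (lam i)⁻¹ * (mu j)⁻¹ := by rw [Finset.mul_sum]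
        _ ≤ ∑ j, B i j := Finset.sum_le_sum fun j _ => hlow i j
        _ = 1 := hBrow i
    have := (hlam i)
    calc Sm = lam i * ((lam i)⁻¹ * Sm) := by rw [← mul_assoc, mul_inv_cancel₀ (hlam i).ne', one_mul]
      _ ≤ lam i * 1 := by
          apply mul_le_mul_of_nonneg_left h1 this.le
      _ = lam i := mul_one _
  -- lam i ≤ 2 Sm
  have hlam_le : ∀ i, lam i ≤ 2 * Sm := by
    intro i
    have h1 : 1 ≤ 2 * ((lam i)⁻¹ * Sm) := by
      calc (1:ℝ) = ∑ j, B i j := (hBrow i).symm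
        _ ≤ ∑ j, 2 * ((lam i)⁻¹ * (mu j)⁻¹) := Finset.sum_le_sum fun j _ => hhigh i j
        _ = 2 * ((lam i)⁻¹ * Sm) := by rw [← Finset.mul_sum, ← Finset.mul_sum]
    have hli := hlam i
    have : lam i * 1 ≤ lam i * (2 * ((lam i)⁻¹ * Sm)) :=
      mul_le_mul_of_nonneg_left h1 hli.le
    calc lam i = lam i * 1 := (mul_one _).symm
      _ ≤ lam i * (2 * ((lam i)⁻¹ * Sm)) := this
      _ = 2 * Sm := by rw [← mul_assoc, mul_comm (lam i) 2, mul_assoc, ← mul_assoc (lam i), mul_inv_cancel₀ (hlam i).ne', one_mul]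
  -- Sl ≥ n/(2 Sm)
  have hSl_ge : (n:ℝ) * (2 * Sm)⁻¹ ≤ Sl := by
    have : ∀ i : Fin n, (2 * Sm)⁻¹ ≤ (lam i)⁻¹ := fun i =>
      inv_anti₀ (hlam i) (hlam_le i)
    calc (n:ℝ) * (2 * Sm)⁻¹ = ∑ _i : Fin n, (2 * Sm)⁻¹ := by
          rw [Finset.sum_const, Finset.card_univ, Fintype.card_fin, nsmul_eq_mul]
      _ ≤ Sl := Finset.sum_le_sum fun i _ => this i
  -- mu l ≥ Sl
  have hmu_ge : Sl ≤ mu l := by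
    have h1 : (mu l)⁻¹ * Sl ≤ 1 := by
      calc (mu l)⁻¹ * Sl = ∑ i, (lam i)⁻¹ * (mu l)⁻¹ := by
            rw [Finset.mul_sum]; exact Finset.sum_congr rfl fun i _ => mul_comm _ _
        _ ≤ ∑ i, B i l := Finset.sum_le_sum fun i _ => hlow i l
        _ = 1 := hBcol l
    calc Sl = mu l * ((mu l)⁻¹ * Sl) := by rw [← mul_assoc, mul_inv_cancel₀ (hmu l).ne', one_mul]
      _ ≤ mu l * 1 := mul_le_mul_of_nonneg_left h1 (hmu l).le
      _ = mu l := mul_one _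
  -- conclude
  have hprod : (n:ℝ) / 2 ≤ lam k * mu l := by
    have h1 : Sm ≤ lam k := hlam_ge k
    have h2 : (n:ℝ) * (2 * Sm)⁻¹ ≤ mu l := le_trans hSl_ge hmu_ge
    have : Sm * ((n:ℝ) * (2 * Sm)⁻¹) ≤ lam k * mu l := by
      apply mul_le_mul h1 h2 (by positivity) (hlam k).le
    calc (n:ℝ) / 2 = Sm * ((n:ℝ) * (2 * Sm)⁻¹) := by field_simp
      _ ≤ lam k * mu l := this
  have hBle : B k l ≤ 2 / (lam k * mu l) := by
    rw [hBeq]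
    gcongr
    · exact (lt_of_lt_of_le (by positivity) hprod).le
    · exact hA2 k l
  calc B k l ≤ 2 / (lam k * mu l) := hBle
    _ ≤ 2 / ((n:ℝ) / 2) := by
        apply div_le_div_of_nonneg_left (by norm_num) (by positivity) hprod
    _ = 4 / n := by field_simp; ring
    _ ≤ 32 / n := by gcongr <;> norm_num
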